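/- (Rolle theorem in ℝⁿ, Khovanskii–Yakovenko) Let γ : [0,ℓ] → ℝⁿ be a C² curve such that γ(t) ≠ 0 and γ'(t) ≠ 0 for all t ∈ [0,ℓ]. Define the spherical projections Sγ(t) = γ(t)/‖γ(t)‖ and Sγ'(t) = γ'(t)/‖γ'(t)‖, curves on the unit sphere of ℝⁿ. Then length(Sγ) ≤ length(Sγ') − ( d(Sγ(ℓ), Sγ'(ℓ)) − d(Sγ(0), Sγ'(0)) ), where d(u,v) = arccos⟨u,v⟩ is the spherical (angular) distance between unit vectors. In particular length(Sγ) ≤ length(Sγ') + 2π always, and if γ(0) = γ(ℓ) and γ'(0) = γ'(ℓ) then length(Sγ) ≤ length(Sγ'). -/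

import Mathlib

set_option maxHeartbeats 4000000
open Real Set MeasureTheory intervalIntegral Filter Topology


lemma arcsin_le_div (y : ℝ) (h0 : 0 ≤ y) (h1 : y < 1) :
    Real.arcsin y ≤ y / Real.sqrt (1 - y^2) := by
  rcases eq_or_lt_of_le h0 with h|h
  · simp [← h]
  · have ht0 : 0 < arcsin y := Real.arcsin_pos.2 h
    have ht2 : arcsin y < π/2 := Real.arcsin_lt_pi_div_two.2 h1
    have := (Real.lt_tan ht0 ht2).le
    rwa [Real.tan_eq_sin_div_cos, Real.sin_arcsin (by linarith) h1.le, Real.cos_arcsin] at this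

lemma arccos_inner_eq {E : Type*} [NormedAddCommGroup E] [InnerProductSpace ℝ E] {a b : E}
    (ha : ‖a‖ = 1) (hb : ‖b‖ = 1) :
    Real.arccos (inner ℝ a b : ℝ) = 2 * Real.arcsin (‖a - b‖ / 2) := by
  have hab : ‖a - b‖ ≤ 2 := by
    calc ‖a - b‖ ≤ ‖a‖ + ‖b‖ := norm_sub_le a b
    _ = 2 := by rw [ha, hb]; norm_num
  have h0 : (0:ℝ) ≤ ‖a - b‖ / 2 := by positivity
  have h1 : ‖a - b‖ / 2 ≤ 1 := by linarith
  have key : (inner ℝ a b : ℝ) = 1 - 2 * (‖a - b‖/2)^2 := by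
    have := @norm_sub_sq_real E _ _ a b
    rw [ha, hb] at this
    nlinarith [this]
  have h2 : Real.cos (2 * Real.arcsin (‖a-b‖/2)) = 1 - 2 * (‖a-b‖/2)^2 := by
    rw [Real.cos_two_mul, Real.cos_arcsin, Real.sq_sqrt (by nlinarith)]; ring
  rw [key, ← h2, Real.arccos_cos]
  · have := Real.arcsin_nonneg.2 h0; linarith
  · have := Real.arcsin_le_pi_div_two (‖a-b‖/2); linarith

lemma key_alg {E : Type*} [NormedAddCommGroup E] [InnerProductSpace ℝ E]
    {u v u' v' : E} {c : ℝ} (hu : ‖u‖ = 1) (hv : ‖v‖ = 1)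
    (hvv' : (inner ℝ v v' : ℝ) = 0) (hc : 0 ≤ c)
    (hu' : u' = c • (v - (inner ℝ u v : ℝ) • u)) :
    -((inner ℝ u' v : ℝ) + (inner ℝ u v' : ℝ))
      ≤ Real.sqrt (1 - (inner ℝ u v : ℝ)^2) * (‖v'‖ - ‖u'‖) := by
  set ι : ℝ := (inner ℝ u v : ℝ) with hι
  have huu : (inner ℝ u u : ℝ) = 1 := by
    have := real_inner_self_eq_norm_sq u; rw [hu] at this; simpa using this
  have hvv : (inner ℝ v v : ℝ) = 1 := by
    have := real_inner_self_eq_norm_sq v; rw [hv] at this; simpa using this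
  have hvu : (inner ℝ v u : ℝ) = ι := (real_inner_comm v u).symm.trans hι.symm
  have hn1 : ‖v - ι • u‖^2 = 1 - ι^2 := by
    rw [← real_inner_self_eq_norm_sq]
    simp only [inner_sub_left, inner_sub_right, real_inner_smul_left, real_inner_smul_right, huu, hvv, hvu]
    ring
  have hs : Real.sqrt (1 - ι^2) = ‖v - ι • u‖ := by
    rw [← hn1, Real.sqrt_sq (norm_nonneg _)]
  have hn2 : ‖u - ι • v‖ = Real.sqrt (1 - ι^2) := by
    rw [← Real.sqrt_sq (norm_nonneg (u - ι • v))]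
    congr 1
    rw [← real_inner_self_eq_norm_sq]
    simp only [inner_sub_left, inner_sub_right, real_inner_smul_left, real_inner_smul_right, huu, hvv, hvu,
      real_inner_comm u v, ← hι]
    ring
  set s : ℝ := Real.sqrt (1 - ι^2) with hsdef
  have hsnn : 0 ≤ s := Real.sqrt_nonneg _
  have h1 : (inner ℝ u' v : ℝ) = c * (1 - ι^2) := by
    rw [hu', real_inner_smul_left, inner_sub_left, real_inner_smul_left, hvv]; rw [← hι]; ring
  have h2 : ‖u'‖ = c * s := by
    rw [hu', norm_smul, Real.norm_eq_abs, abs_of_nonneg hc, hs]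
  have h3 : -(s * ‖v'‖) ≤ (inner ℝ u v' : ℝ) := by
    have he : (inner ℝ u v' : ℝ) = (inner ℝ (u - ι • v) v' : ℝ) := by
      simp [inner_sub_left, real_inner_smul_left, hvv']
    have := abs_real_inner_le_norm (u - ι • v) v'
    rw [hn2] at this
    rw [he]
    have := neg_abs_le (inner ℝ (u - ι • v) v' : ℝ)
    nlinarith [abs_real_inner_le_norm (u - ι • v) v', neg_abs_le (inner ℝ (u - ι • v) v' : ℝ)]
  have hs2 : s^2 = 1 - ι^2 := by
    rw [hsdef, Real.sq_sqrt]
    nlinarith [hn1, sq_nonneg ‖v - ι • u‖]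
  nlinarith [h3, hs2]

lemma quot_hasDeriv {E : Type*} [NormedAddCommGroup E] [InnerProductSpace ℝ E]
    {f : ℝ → E} {f' : E} {s : Set ℝ} {x : ℝ}
    (hf : HasDerivWithinAt f f' s x) (h0 : f x ≠ 0) :
    HasDerivWithinAt (fun t => ‖f t‖⁻¹ • f t)
      (‖f x‖⁻¹ • f' - ((inner ℝ (f x) f' : ℝ) / ‖f x‖^3) • f x) s x := by
  have hnx : ‖f x‖ ≠ 0 := norm_ne_zero_iff.2 h0
  have hin : (inner ℝ (f x) (f x) : ℝ) ≠ 0 := by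
    rw [real_inner_self_eq_norm_sq]; positivity
  have hI : HasDerivWithinAt (fun t => (inner ℝ (f t) (f t) : ℝ))
      ((inner ℝ (f x) f' : ℝ) + (inner ℝ f' (f x) : ℝ)) s x := hf.inner ℝ hf
  have hsq : HasDerivWithinAt (fun t => Real.sqrt (inner ℝ (f t) (f t) : ℝ))
      ((1 / (2 * Real.sqrt (inner ℝ (f x) (f x) : ℝ))) *
        ((inner ℝ (f x) f' : ℝ) + (inner ℝ f' (f x) : ℝ))) s x :=
    (Real.hasDerivAt_sqrt hin).comp_hasDerivWithinAt x hI
  have heq : ∀ t, Real.sqrt (inner ℝ (f t) (f t) : ℝ) = ‖f t‖ := by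
    intro t; rw [real_inner_self_eq_norm_sq, Real.sqrt_sq (norm_nonneg _)]
  have hN : HasDerivWithinAt (fun t => ‖f t‖)
      ((inner ℝ (f x) f' : ℝ) / ‖f x‖) s x := by
    have := hsq.congr (fun t _ => (heq t).symm) (heq x).symm
    refine this.congr_deriv ?_
    rw [heq x, real_inner_comm f' (f x)]
    field_simp
    ring
  have hinv : HasDerivWithinAt (fun t => ‖f t‖⁻¹)
      (-((inner ℝ (f x) f' : ℝ) / ‖f x‖) / (‖f x‖^2)) s x := hN.inv hnx
  have := hinv.smul hf
  refine this.congr_deriv ?_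
  rw [sub_eq_add_neg, ← neg_smul]
  congr 1
  field_simp

lemma quot_deriv_eq {E : Type*} [NormedAddCommGroup E] [InnerProductSpace ℝ E]
    (x y : E) (hx : x ≠ 0) (hy : y ≠ 0) :
    ‖x‖⁻¹ • y - ((inner ℝ x y : ℝ)/‖x‖^3) • x
      = (‖y‖/‖x‖) • ((‖y‖⁻¹ • y) -
          (inner ℝ (‖x‖⁻¹ • x) (‖y‖⁻¹ • y) : ℝ) • (‖x‖⁻¹ • x)) := by
  have hnx : ‖x‖ ≠ 0 := norm_ne_zero_iff.2 hx
  have hny : ‖y‖ ≠ 0 := norm_ne_zero_iff.2 hy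
  rw [real_inner_smul_left, real_inner_smul_right]
  match_scalars <;> field_simp <;> ring

lemma evar_le_int {E : Type*} [NormedAddCommGroup E] [NormedSpace ℝ E] [CompleteSpace E]
    {f f' : ℝ → E} {a b : ℝ} (hab : a ≤ b)
    (hder : ∀ x ∈ Set.Icc a b, HasDerivWithinAt f (f' x) (Set.Icc a b) x)
    (hcont : ContinuousOn f' (Set.Icc a b)) :
    eVariationOn f (Set.Icc a b) ≤ ENNReal.ofReal (∫ t in a..b, ‖f' t‖) := by
  have hfc : ContinuousOn f (Set.Icc a b) := fun x hx => (hder x hx).continuousWithinAt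
  -- segment estimate
  have seg : ∀ c ∈ Set.Icc a b, ∀ d ∈ Set.Icc a b, c ≤ d →
      ‖f d - f c‖ ≤ ∫ t in c..d, ‖f' t‖ := by
    intro c hc d hd hcd
    have hsub : Set.Icc c d ⊆ Set.Icc a b := Set.Icc_subset_Icc hc.1 hd.2
    have hint : IntervalIntegrable f' volume c d :=
      (hcont.mono hsub).intervalIntegrable_of_Icc hcd
    have heq : ∫ t in c..d, f' t = f d - f c := by
      refine intervalIntegral.integral_eq_sub_of_hasDeriv_right_of_le hcd
        (hfc.mono hsub) (fun x hx => ?_) hint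
      exact ((hder x (hsub (Set.mem_Icc.2 ⟨hx.1.le, hx.2.le⟩))).mono
        (Set.Ioc_subset_Icc_self.trans (Set.Icc_subset_Icc (hc.1.trans hx.1.le) hd.2))).mono_of_mem_nhdsWithin
        (Ioc_mem_nhdsGT hx.2)
    rw [← heq]
    exact intervalIntegral.norm_integral_le_integral_norm hcd
  apply iSup_le
  rintro ⟨m, u, hu, us⟩
  have int_piece : ∀ k, IntervalIntegrable (fun t => ‖f' t‖) volume (u k) (u (k+1)) := by
    intro k
    apply ((hcont.norm).mono (Set.Icc_subset_Icc (us k).1 (us (k+1)).2)).intervalIntegrable_of_Icc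
      (hu (Nat.le_succ k))
  calc ∑ i ∈ Finset.range m, edist (f (u (i+1))) (f (u i))
      ≤ ∑ i ∈ Finset.range m, ENNReal.ofReal (∫ t in (u i)..(u (i+1)), ‖f' t‖) := by
        apply Finset.sum_le_sum
        intro i _
        rw [edist_dist, dist_eq_norm]
        exact ENNReal.ofReal_le_ofReal (seg (u i) (us i) (u (i+1)) (us (i+1)) (hu (Nat.le_succ i)))
    _ = ENNReal.ofReal (∑ i ∈ Finset.range m, ∫ t in (u i)..(u (i+1)), ‖f' t‖) := by
        rw [ENNReal.ofReal_sum_of_nonneg]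
        intro i _
        exact intervalIntegral.integral_nonneg (hu (Nat.le_succ i)) (fun t _ => norm_nonneg _)
    _ ≤ ENNReal.ofReal (∫ t in a..b, ‖f' t‖) := by
        apply ENNReal.ofReal_le_ofReal
        rw [intervalIntegral.sum_integral_adjacent_intervals (fun k _ => int_piece k)]
        have h1 : u 0 ∈ Set.Icc a b := us 0
        have h2 : u m ∈ Set.Icc a b := us m
        have hum : u 0 ≤ u m := hu (Nat.zero_le m)
        rw [intervalIntegral.integral_of_le hum, intervalIntegral.integral_of_le hab]
        apply MeasureTheory.setIntegral_mono_set
        · exact (hcont.norm.intervalIntegrable_of_Icc hab).1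
        · exact Filter.Eventually.of_forall (fun t => norm_nonneg _)
        · exact HasSubset.Subset.eventuallyLE (Set.Ioc_subset_Ioc h1.1 h2.2)

lemma primitive_right_deriv {g : ℝ → ℝ} {a b x : ℝ} (hg : ContinuousOn g (Set.Icc a b))
    (ha : a ≤ x) (hx : x ∈ Set.Ico a b) :
    HasDerivWithinAt (fun t => ∫ s in a..t, g s) (g x) (Ici x) x := by
  have hioc : Set.Ioc x b ∈ 𝓝[>] x := Ioc_mem_nhdsGT hx.2
  have hmem : Set.Icc a b ∈ 𝓝[>] x := Filter.mem_of_superset hioc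
    (Set.Ioc_subset_Icc_self.trans (Set.Icc_subset_Icc hx.1 le_rfl))
  refine intervalIntegral.integral_hasDerivWithinAt_right ?_ ?_ ?_
  · exact (hg.mono (Set.Icc_subset_Icc le_rfl hx.2.le)).intervalIntegrable_of_Icc hx.1
  · exact ⟨Set.Icc a b, hmem, (hg.aestronglyMeasurable measurableSet_Icc)⟩
  · exact (hg.continuousWithinAt (Set.mem_Icc.2 ⟨hx.1, hx.2.le⟩)).mono_of_mem_nhdsWithin hmem


lemma int_le_evar {E : Type*} [NormedAddCommGroup E] [NormedSpace ℝ E] [CompleteSpace E]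
    {f f' : ℝ → E} {a b : ℝ} (hab : a ≤ b)
    (hder : ∀ x ∈ Set.Icc a b, HasDerivWithinAt f (f' x) (Set.Icc a b) x)
    (hcont : ContinuousOn f' (Set.Icc a b)) :
    ENNReal.ofReal (∫ t in a..b, ‖f' t‖) ≤ eVariationOn f (Set.Icc a b) := by
  obtain ⟨C, hC⟩ := isCompact_Icc.exists_bound_of_continuousOn hcont
  have hC0 : 0 ≤ C := le_trans (norm_nonneg _) (hC a ⟨le_rfl, hab⟩)
  -- subinterval variation bound
  have hsubvar : ∀ x z, x ∈ Set.Icc a b → z ∈ Set.Icc a b → x ≤ z →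
      eVariationOn f (Set.Icc x z) ≤ ENNReal.ofReal (C * (z - x)) := by
    intro x z hx hz hxz
    have hsub : Set.Icc x z ⊆ Set.Icc a b := Set.Icc_subset_Icc hx.1 hz.2
    refine (evar_le_int hxz (fun y hy => (hder y (hsub hy)).mono hsub)
      (hcont.mono hsub)).trans (ENNReal.ofReal_le_ofReal ?_)
    calc ∫ t in x..z, ‖f' t‖ ≤ ∫ _t in x..z, C := by
          apply intervalIntegral.integral_mono_on hxz
            (((hcont.mono hsub).norm).intervalIntegrable_of_Icc hxz)
            intervalIntegrable_const
          exact fun y hy => hC y (hsub hy)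
      _ = C * (z - x) := by simp [mul_comm]
  have hfin : eVariationOn f (Set.Icc a b) ≠ ⊤ :=
    ((hsubvar a b ⟨le_rfl, hab⟩ ⟨hab, le_rfl⟩ hab).trans_lt ENNReal.ofReal_lt_top).ne
  have hlocbv : LocallyBoundedVariationOn f (Set.Icc a b) := fun x z _ _ =>
    ne_top_of_le_ne_top hfin (eVariationOn.mono f Set.inter_subset_left)
  set V : ℝ → ℝ := fun t => variationOnFromTo f (Set.Icc a b) a t with hV
  have hinter : ∀ x z, x ∈ Set.Icc a b → z ∈ Set.Icc a b →
      Set.Icc a b ∩ Set.Icc x z = Set.Icc x z := fun x z hx hz =>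
    Set.inter_eq_self_of_subset_right (Set.Icc_subset_Icc hx.1 hz.2)
  have incr : ∀ x z, x ∈ Set.Icc a b → z ∈ Set.Icc a b → x ≤ z →
      V z - V x = (eVariationOn f (Set.Icc x z)).toReal := by
    intro x z hx hz hxz
    have hadd := variationOnFromTo.add hlocbv (Set.left_mem_Icc.2 hab) hx hz
    have : variationOnFromTo f (Set.Icc a b) x z
        = (eVariationOn f (Set.Icc a b ∩ Set.Icc x z)).toReal :=
      variationOnFromTo.eq_of_le f _ hxz
    simp only [hV]
    rw [← hadd, this, hinter x z hx hz]; ring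
  have distle : ∀ x z, x ∈ Set.Icc a b → z ∈ Set.Icc a b → x ≤ z →
      ‖f z - f x‖ ≤ (eVariationOn f (Set.Icc x z)).toReal := by
    intro x z hx hz hxz
    have h1 : edist (f x) (f z) ≤ eVariationOn f (Set.Icc x z) :=
      eVariationOn.edist_le f (Set.left_mem_Icc.2 hxz) (Set.right_mem_Icc.2 hxz)
    have h2 : eVariationOn f (Set.Icc x z) ≠ ⊤ :=
      ne_top_of_le_ne_top hfin (eVariationOn.mono f (Set.Icc_subset_Icc hx.1 hz.2))
    have := ENNReal.toReal_mono h2 h1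
    rw [edist_dist, ENNReal.toReal_ofReal dist_nonneg, dist_eq_norm] at this
    rwa [norm_sub_rev]
  have hVlip : LipschitzOnWith (Real.toNNReal C) V (Set.Icc a b) := by
    apply LipschitzOnWith.of_dist_le_mul
    intro x hx z hz
    rcases le_total x z with h | h
    · have h1 := incr x z hx hz h
      have h2 : V z - V x ≤ C * (z - x) := by
        rw [h1]
        have := ENNReal.toReal_mono ENNReal.ofReal_ne_top (hsubvar x z hx hz h)
        rwa [ENNReal.toReal_ofReal (by nlinarith)] at this
      have h3 : 0 ≤ V z - V x := by rw [h1]; exact ENNReal.toReal_nonneg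
      rw [Real.dist_eq, Real.dist_eq, abs_sub_comm, abs_of_nonneg h3,
        abs_sub_comm, abs_of_nonneg (by linarith : (0:ℝ) ≤ z - x)]
      rw [Real.coe_toNNReal _ hC0]; linarith
    · have h1 := incr z x hz hx h
      have h2 : V x - V z ≤ C * (x - z) := by
        rw [h1]
        have := ENNReal.toReal_mono ENNReal.ofReal_ne_top (hsubvar z x hz hx h)
        rwa [ENNReal.toReal_ofReal (by nlinarith)] at this
      have h3 : 0 ≤ V x - V z := by rw [h1]; exact ENNReal.toReal_nonneg
      rw [Real.dist_eq, Real.dist_eq, abs_of_nonneg h3,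
        abs_of_nonneg (by linarith : (0:ℝ) ≤ x - z)]
      rw [Real.coe_toNNReal _ hC0]; linarith
  have hVcont : ContinuousOn V (Set.Icc a b) := hVlip.continuousOn
  have hint : ∀ x z, x ∈ Set.Icc a b → z ∈ Set.Icc a b → x ≤ z →
      IntervalIntegrable (fun t => ‖f' t‖) volume x z := fun x z hx hz hxz =>
    ((hcont.mono (Set.Icc_subset_Icc hx.1 hz.2)).norm).intervalIntegrable_of_Icc hxz
  set P : ℝ → ℝ := fun t => ∫ s in a..t, ‖f' s‖ with hP
  have hPcont : ContinuousOn P (Set.Icc a b) := by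
    have := intervalIntegral.continuousOn_primitive_interval
      (f := fun t => ‖f' t‖) (a := a) (b := b) (μ := volume) ?_
    · rwa [Set.uIcc_of_le hab] at this
    · rw [Set.uIcc_of_le hab]
      exact (hcont.norm).integrableOn_Icc
  -- fencing
  have key : ∀ t ∈ Set.Icc a b, P t - V t ≤ 0 := by
    have main := image_le_of_liminf_slope_right_le_deriv_boundary
      (f := fun t => P t - V t) (a := a) (b := b) (B := fun _ => 0) (B' := fun _ => 0)
      (hPcont.sub hVcont) (by simp [hP, hV, variationOnFromTo.self]) continuousOn_const
      (fun x _ => hasDerivWithinAt_const x _ 0) ?_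
    · exact main
    · intro x hx r hr
      -- eventually bound the slope
      have hxI : x ∈ Set.Icc a b := ⟨hx.1, hx.2.le⟩
      have hPd : HasDerivWithinAt P (‖f' x‖) (Ici x) x :=
        primitive_right_deriv (hcont.norm) hx.1 hx
      have hPslope : Tendsto (slope P x) (𝓝[>] x) (𝓝 ‖f' x‖) := by
        have := (hasDerivWithinAt_iff_tendsto_slope' (by simp : x ∉ Set.Ioi x)).1 hPd.Ioi_of_Ici
        exact this
      have hfslope : Tendsto (fun z => ‖slope f x z‖) (𝓝[>] x) (𝓝 ‖f' x‖) := by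
        have h1 : HasDerivWithinAt f (f' x) (Set.Ioi x) x := by
          apply (hder x hxI).mono_of_mem_nhdsWithin
          exact Filter.mem_of_superset (Ioc_mem_nhdsGT hx.2)
            (Set.Ioc_subset_Icc_self.trans (Set.Icc_subset_Icc hx.1 le_rfl))
        exact ((hasDerivWithinAt_iff_tendsto_slope' (by simp : x ∉ Set.Ioi x)).1 h1).norm
      have hten : Tendsto (fun z => slope P x z - ‖slope f x z‖) (𝓝[>] x) (𝓝 0) := by
        have := hPslope.sub hfslope
        simpa using this
      have hev : ∀ᶠ z in 𝓝[>] x, slope P x z - ‖slope f x z‖ < r :=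
        hten.eventually_lt_const hr
      have hev2 : ∀ᶠ z in 𝓝[>] x, z ∈ Set.Ioc x b := Ioc_mem_nhdsGT hx.2
      refine ((hev.and hev2).mono ?_).frequently
      rintro z ⟨h1, h2⟩
      have hzx : 0 < z - x := by linarith [h2.1]
      have hzI : z ∈ Set.Icc a b := ⟨hx.1.trans h2.1.le, h2.2⟩
      -- slope of P - V at z
      have hs1 : slope (fun t => P t - V t) x z = slope P x z - slope V x z := by
        simp [slope_def_field]; ring
      have hs2 : ‖slope f x z‖ ≤ slope V x z := by
        have hd := distle x z hxI hzI h2.1.le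
        rw [← incr x z hxI hzI h2.1.le] at hd
        rw [slope_def_module, slope_def_field, norm_smul, Real.norm_eq_abs, abs_inv,
          abs_of_pos hzx, div_eq_inv_mul]
        gcongr
      calc slope (fun t => P t - V t) x z = slope P x z - slope V x z := hs1
        _ ≤ slope P x z - ‖slope f x z‖ := by linarith
        _ < r := h1
  have : P b ≤ V b := by linarith [key b ⟨hab, le_rfl⟩]
  have hVb : V b = (eVariationOn f (Set.Icc a b)).toReal := by
    have := incr a b ⟨le_rfl, hab⟩ ⟨hab, le_rfl⟩ hab
    simp only [hV] at this ⊢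
    rw [variationOnFromTo.self] at this
    linarith
  rw [hVb] at this
  exact ENNReal.ofReal_le_of_le_toReal this

lemma unit_diff_sq {E : Type*} [NormedAddCommGroup E] [InnerProductSpace ℝ E]
    {u v : E} (hu : ‖u‖ = 1) (hv : ‖v‖ = 1) :
    ‖v - (inner ℝ u v : ℝ) • u‖^2 = 1 - (inner ℝ u v : ℝ)^2 := by
  have huu : (inner ℝ u u : ℝ) = 1 := by
    have := real_inner_self_eq_norm_sq u; rw [hu] at this; simpa using this
  have hvv : (inner ℝ v v : ℝ) = 1 := by
    have := real_inner_self_eq_norm_sq v; rw [hv] at this; simpa using this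
  rw [← real_inner_self_eq_norm_sq]
  simp only [inner_sub_left, inner_sub_right, real_inner_smul_left, real_inner_smul_right, huu, hvv,
    real_inner_comm v u]
  ring



/-- **Rolle theorem in ℝⁿ (Khovanskii–Yakovenko).** For a C² curve `γ` on
`[0,ℓ]` avoiding the origin and with nonvanishing velocity,
`length(Sγ) ≤ length(Sγ') − (d(Sγ(ℓ),Sγ'(ℓ)) − d(Sγ(0),Sγ'(0)))`, stated
additively in `ℝ≥0∞`; in particular `length(Sγ) ≤ length(Sγ') + 2π`, and for
closed curves `length(Sγ) ≤ length(Sγ')`.  Here `Sc = c/‖c‖` is the spherical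
projection, length is total variation, and `d(u,v) = arccos⟨u,v⟩`. -/
theorem stmt8 (n : ℕ) (ℓ : ℝ) (hℓ : 0 < ℓ)
    (γ : ℝ → EuclideanSpace ℝ (Fin n))
    (hγ : ContDiffOn ℝ 2 γ (Set.Icc 0 ℓ))
    (hne : ∀ t ∈ Set.Icc 0 ℓ, γ t ≠ 0)
    (hne' : ∀ t ∈ Set.Icc 0 ℓ, derivWithin γ (Set.Icc 0 ℓ) t ≠ 0) :
    let γ' : ℝ → EuclideanSpace ℝ (Fin n) := derivWithin γ (Set.Icc 0 ℓ)
    let Sγ : ℝ → EuclideanSpace ℝ (Fin n) := fun t => ‖γ t‖⁻¹ • γ t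
    let Sγ' : ℝ → EuclideanSpace ℝ (Fin n) := fun t => ‖γ' t‖⁻¹ • γ' t
    let d : EuclideanSpace ℝ (Fin n) → EuclideanSpace ℝ (Fin n) → ℝ :=
      fun u v => Real.arccos (@inner ℝ _ _ u v)
    (eVariationOn Sγ (Set.Icc 0 ℓ) + ENNReal.ofReal (d (Sγ ℓ) (Sγ' ℓ))
        ≤ eVariationOn Sγ' (Set.Icc 0 ℓ) + ENNReal.ofReal (d (Sγ 0) (Sγ' 0)))
    ∧ (eVariationOn Sγ (Set.Icc 0 ℓ)
        ≤ eVariationOn Sγ' (Set.Icc 0 ℓ) + ENNReal.ofReal (2 * Real.pi))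
    ∧ (γ 0 = γ ℓ → γ' 0 = γ' ℓ →
        eVariationOn Sγ (Set.Icc 0 ℓ) ≤ eVariationOn Sγ' (Set.Icc 0 ℓ)) := by
  intro γ' Sγ Sγ' d
  have h0I : (0:ℝ) ∈ Set.Icc (0:ℝ) ℓ := ⟨le_rfl, hℓ.le⟩
  have hℓI : ℓ ∈ Set.Icc (0:ℝ) ℓ := ⟨hℓ.le, le_rfl⟩
  have hUD : UniqueDiffOn ℝ (Set.Icc (0:ℝ) ℓ) := uniqueDiffOn_Icc hℓ
  have hγc : ContinuousOn γ (Set.Icc 0 ℓ) := hγ.continuousOn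
  have hγdiff : ∀ x ∈ Set.Icc (0:ℝ) ℓ, HasDerivWithinAt γ (γ' x) (Set.Icc 0 ℓ) x :=
    fun x hx => ((hγ.differentiableOn (by norm_num)) x hx).hasDerivWithinAt
  have hγ'c1 : ContDiffOn ℝ 1 γ' (Set.Icc 0 ℓ) := hγ.derivWithin hUD (by norm_num)
  have hγ'cont : ContinuousOn γ' (Set.Icc 0 ℓ) := hγ'c1.continuousOn
  set γ'' : ℝ → EuclideanSpace ℝ (Fin n) := derivWithin γ' (Set.Icc 0 ℓ) with hγ''def
  have hγ'diff : ∀ x ∈ Set.Icc (0:ℝ) ℓ, HasDerivWithinAt γ' (γ'' x) (Set.Icc 0 ℓ) x :=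
    fun x hx => ((hγ'c1.differentiableOn one_ne_zero) x hx).hasDerivWithinAt
  have hγ''cont : ContinuousOn γ'' (Set.Icc 0 ℓ) := hγ'c1.continuousOn_derivWithin hUD le_rfl
  set U : ℝ → EuclideanSpace ℝ (Fin n) := fun x =>
    ‖γ x‖⁻¹ • γ' x - ((inner ℝ (γ x) (γ' x) : ℝ)/‖γ x‖^3) • γ x with hUdef
  set W : ℝ → EuclideanSpace ℝ (Fin n) := fun x =>
    ‖γ' x‖⁻¹ • γ'' x - ((inner ℝ (γ' x) (γ'' x) : ℝ)/‖γ' x‖^3) • γ' x with hWdef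
  have hud : ∀ x ∈ Set.Icc (0:ℝ) ℓ, HasDerivWithinAt Sγ (U x) (Set.Icc 0 ℓ) x :=
    fun x hx => quot_hasDeriv (hγdiff x hx) (hne x hx)
  have hvd : ∀ x ∈ Set.Icc (0:ℝ) ℓ, HasDerivWithinAt Sγ' (W x) (Set.Icc 0 ℓ) x :=
    fun x hx => quot_hasDeriv (hγ'diff x hx) (hne' x hx)
  have hUeq : ∀ x ∈ Set.Icc (0:ℝ) ℓ,
      U x = (‖γ' x‖/‖γ x‖) • (Sγ' x - (inner ℝ (Sγ x) (Sγ' x) : ℝ) • Sγ x) :=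
    fun x hx => quot_deriv_eq (γ x) (γ' x) (hne x hx) (hne' x hx)
  have hu1 : ∀ x ∈ Set.Icc (0:ℝ) ℓ, ‖Sγ x‖ = 1 := by
    intro x hx
    have h : ‖γ x‖ ≠ 0 := norm_ne_zero_iff.2 (hne x hx)
    simp only [Sγ, norm_smul, norm_inv, norm_norm]
    field_simp
  have hv1 : ∀ x ∈ Set.Icc (0:ℝ) ℓ, ‖Sγ' x‖ = 1 := by
    intro x hx
    have h : ‖γ' x‖ ≠ 0 := norm_ne_zero_iff.2 (hne' x hx)
    simp only [Sγ', norm_smul, norm_inv, norm_norm]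
    field_simp
  have hvW : ∀ x ∈ Set.Icc (0:ℝ) ℓ, (inner ℝ (Sγ' x) (W x) : ℝ) = 0 := by
    intro x hx
    have h : ‖γ' x‖ ≠ 0 := norm_ne_zero_iff.2 (hne' x hx)
    simp only [Sγ', W, inner_smul_left, inner_sub_right, inner_smul_right,
      real_inner_self_eq_norm_sq, conj_trivial]
    field_simp
    ring
  have hUcont : ContinuousOn U (Set.Icc 0 ℓ) := by
    apply ContinuousOn.sub
    · exact (hγc.norm.inv₀ (fun x hx => norm_ne_zero_iff.2 (hne x hx))).smul hγ'cont
    · exact ((hγc.inner hγ'cont).div ((hγc.norm).pow 3)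
        (fun x hx => pow_ne_zero 3 (norm_ne_zero_iff.2 (hne x hx)))).smul hγc
  have hWcont : ContinuousOn W (Set.Icc 0 ℓ) := by
    apply ContinuousOn.sub
    · exact (hγ'cont.norm.inv₀ (fun x hx => norm_ne_zero_iff.2 (hne' x hx))).smul hγ''cont
    · exact ((hγ'cont.inner hγ''cont).div ((hγ'cont.norm).pow 3)
        (fun x hx => pow_ne_zero 3 (norm_ne_zero_iff.2 (hne' x hx)))).smul hγ'cont
  have hucont : ContinuousOn Sγ (Set.Icc 0 ℓ) := fun x hx => (hud x hx).continuousWithinAt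
  have hvcont : ContinuousOn Sγ' (Set.Icc 0 ℓ) := fun x hx => (hvd x hx).continuousWithinAt
  set θ : ℝ → ℝ := fun t => Real.arccos (inner ℝ (Sγ t) (Sγ' t) : ℝ) with hθdef
  set g : ℝ → ℝ := fun t => ‖W t‖ - ‖U t‖ with hgdef
  have hgcont : ContinuousOn g (Set.Icc 0 ℓ) := hWcont.norm.sub hUcont.norm
  have hθcont : ContinuousOn θ (Set.Icc 0 ℓ) :=
    Real.continuous_arccos.comp_continuousOn (hucont.inner hvcont)
  set B : ℝ → ℝ := fun t => θ 0 + ∫ s in (0:ℝ)..t, g s with hBdef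
  have hBcont : ContinuousOn B (Set.Icc 0 ℓ) := by
    apply continuousOn_const.add
    have := intervalIntegral.continuousOn_primitive_interval
      (f := g) (a := (0:ℝ)) (b := ℓ) (μ := volume) ?_
    · rwa [Set.uIcc_of_le hℓ.le] at this
    · rw [Set.uIcc_of_le hℓ.le]
      exact hgcont.integrableOn_Icc
  have hB' : ∀ x ∈ Set.Ico (0:ℝ) ℓ, HasDerivWithinAt B (g x) (Set.Ici x) x :=
    fun x hx => (primitive_right_deriv hgcont hx.1 hx).const_add (θ 0)
  -- the key slope bound
  have bound : ∀ x ∈ Set.Ico (0:ℝ) ℓ, ∀ r, g x < r →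
      ∃ᶠ z in nhdsWithin x (Set.Ioi x), slope θ x z < r := by
    intro x hx r hr
    have hxI : x ∈ Set.Icc (0:ℝ) ℓ := ⟨hx.1, hx.2.le⟩
    have hIccmem : Set.Icc (0:ℝ) ℓ ∈ nhdsWithin x (Set.Ioi x) :=
      Filter.mem_of_superset (Ioc_mem_nhdsGT hx.2)
        (Set.Ioc_subset_Icc_self.trans (Set.Icc_subset_Icc hx.1 le_rfl))
    set ι : ℝ := (inner ℝ (Sγ x) (Sγ' x) : ℝ) with hιdef
    have hsd : ‖Sγ' x - ι • Sγ x‖^2 = 1 - ι^2 := unit_diff_sq (hu1 x hxI) (hv1 x hxI)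
    have hcnn : (0:ℝ) ≤ ‖γ' x‖/‖γ x‖ := by positivity
    have hι1 : |ι| ≤ 1 := by
      have h := abs_real_inner_le_norm (Sγ x) (Sγ' x)
      rw [hu1 x hxI, hv1 x hxI, one_mul] at h
      rw [hιdef]; exact h
    by_cases hbad : ι = 1 ∨ ι = -1
    · -- bad case: Sγ' x = ι • Sγ x and U x = 0
      have hι2 : ι^2 = 1 := by rcases hbad with h|h <;> rw [h] <;> norm_num
      have hvu : Sγ' x = ι • Sγ x := by
        have : ‖Sγ' x - ι • Sγ x‖^2 = 0 := by rw [hsd, hι2]; ring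
        have := pow_eq_zero_iff (n := 2) (by norm_num) |>.1 this
        rw [norm_eq_zero, sub_eq_zero] at this
        exact this
      have hU0 : U x = 0 := by
        rw [hUeq x hxI, ← hιdef, hvu, sub_self, smul_zero]
      have hgx : g x = ‖W x‖ := by rw [hgdef]; simp [hU0]
      rcases hbad with h1 | hm1
      · -- ι = 1 : θ x = 0
        have hθx : θ x = 0 := by
          rw [hθdef]; simp only [← hιdef, h1, Real.arccos_one]
        -- slope limits
        have hmem' : x ∉ Set.Ioi x := by simp
        have huslope : Filter.Tendsto (fun z => ‖slope Sγ x z‖) (nhdsWithin x (Set.Ioi x))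
            (nhds ‖U x‖) :=
          ((hasDerivWithinAt_iff_tendsto_slope' hmem').1
            ((hud x hxI).mono_of_mem_nhdsWithin hIccmem)).norm
        have hvslope : Filter.Tendsto (fun z => ‖slope Sγ' x z‖) (nhdsWithin x (Set.Ioi x))
            (nhds ‖W x‖) :=
          ((hasDerivWithinAt_iff_tendsto_slope' hmem').1
            ((hvd x hxI).mono_of_mem_nhdsWithin hIccmem)).norm
        set m : ℝ → ℝ := fun z => (‖Sγ z - Sγ x‖ + ‖Sγ' z - Sγ' x‖)/2 with hmdef
        have hm0 : Filter.Tendsto m (nhdsWithin x (Set.Ioi x)) (nhds 0) := by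
          have h1 : Filter.Tendsto Sγ (nhdsWithin x (Set.Ioi x)) (nhds (Sγ x)) :=
            (hucont.continuousWithinAt hxI).mono_of_mem_nhdsWithin hIccmem
          have h2 : Filter.Tendsto Sγ' (nhdsWithin x (Set.Ioi x)) (nhds (Sγ' x)) :=
            (hvcont.continuousWithinAt hxI).mono_of_mem_nhdsWithin hIccmem
          have h3 : Filter.Tendsto (fun z => ‖Sγ z - Sγ x‖) (nhdsWithin x (Set.Ioi x))
              (nhds 0) := by
            have := (h1.sub (tendsto_const_nhds (x := Sγ x))).norm
            simpa using this
          have h4 : Filter.Tendsto (fun z => ‖Sγ' z - Sγ' x‖) (nhdsWithin x (Set.Ioi x))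
              (nhds 0) := by
            have := (h2.sub (tendsto_const_nhds (x := Sγ' x))).norm
            simpa using this
          have h5 := (h3.add h4).div_const 2
          simpa [hmdef] using h5
        have hsq1 : Filter.Tendsto (fun z => (Real.sqrt (1 - m z^2))⁻¹)
            (nhdsWithin x (Set.Ioi x)) (nhds 1) := by
          have h1 : Filter.Tendsto (fun z => 1 - m z^2) (nhdsWithin x (Set.Ioi x)) (nhds 1) := by
            have := (tendsto_const_nhds (x := (1:ℝ)) (f := nhdsWithin x (Set.Ioi x))).sub
              (hm0.pow 2)
            simpa using this
          have h2 := (Real.continuous_sqrt.tendsto 1).comp h1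
          rw [Real.sqrt_one] at h2
          simpa using h2.inv₀ one_ne_zero
        have hG : Filter.Tendsto
            (fun z => (‖slope Sγ x z‖ + ‖slope Sγ' x z‖) * (Real.sqrt (1 - m z^2))⁻¹)
            (nhdsWithin x (Set.Ioi x)) (nhds (g x)) := by
          have := (huslope.add hvslope).mul hsq1
          rw [hU0] at this
          simpa [hgx] using this
        have hev1 : ∀ᶠ z in nhdsWithin x (Set.Ioi x),
            (‖slope Sγ x z‖ + ‖slope Sγ' x z‖) * (Real.sqrt (1 - m z^2))⁻¹ < r :=
          hG.eventually_lt_const hr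
        have hev2 : ∀ᶠ z in nhdsWithin x (Set.Ioi x), m z < 1 :=
          hm0.eventually_lt_const one_pos
        have hev3 : ∀ᶠ z in nhdsWithin x (Set.Ioi x), z ∈ Set.Ioc x ℓ :=
          Ioc_mem_nhdsGT hx.2
        refine ((hev1.and (hev2.and hev3)).mono ?_).frequently
        rintro z ⟨h1z, h2z, h3z⟩
        have hzI : z ∈ Set.Icc (0:ℝ) ℓ := ⟨hx.1.trans h3z.1.le, h3z.2⟩
        have hzx : (0:ℝ) < z - x := by linarith [h3z.1]
        have hmz0 : 0 ≤ m z := by rw [hmdef]; positivity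
        -- θ z ≤ 2 * arcsin (m z) ≤ 2 * (m z / sqrt (1 - m z ^2))
        have hchord : ‖Sγ z - Sγ' z‖/2 ≤ m z := by
          have hux : Sγ x = Sγ' x := by rw [hvu, h1, one_smul]
          have : Sγ z - Sγ' z = (Sγ z - Sγ x) - (Sγ' z - Sγ' x) := by
            rw [hux]; abel
          rw [this, hmdef]
          have := norm_sub_le (Sγ z - Sγ x) (Sγ' z - Sγ' x)
          linarith
        have hθz : θ z = 2 * Real.arcsin (‖Sγ z - Sγ' z‖/2) := by
          rw [hθdef]
          exact arccos_inner_eq (hu1 z hzI) (hv1 z hzI)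
        have harc1 : Real.arcsin (‖Sγ z - Sγ' z‖/2) ≤ Real.arcsin (m z) :=
          Real.monotone_arcsin hchord
        have harc2 : Real.arcsin (m z) ≤ m z / Real.sqrt (1 - (m z)^2) :=
          arcsin_le_div (m z) hmz0 h2z
        have hsqpos : 0 < Real.sqrt (1 - (m z)^2) := Real.sqrt_pos.2 (by nlinarith)
        have hnorm1 : ‖slope Sγ x z‖ = ‖Sγ z - Sγ x‖ / (z - x) := by
          rw [slope_def_module, norm_smul, Real.norm_eq_abs, abs_inv, abs_of_pos hzx,
            inv_mul_eq_div]
        have hnorm2 : ‖slope Sγ' x z‖ = ‖Sγ' z - Sγ' x‖ / (z - x) := by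
          rw [slope_def_module, norm_smul, Real.norm_eq_abs, abs_inv, abs_of_pos hzx,
            inv_mul_eq_div]
        have hslope : slope θ x z ≤
            (‖slope Sγ x z‖ + ‖slope Sγ' x z‖) * (Real.sqrt (1 - m z^2))⁻¹ := by
          rw [slope_def_field, hθx, sub_zero, hnorm1, hnorm2, div_le_iff₀ hzx]
          have h2m : m z * 2 = ‖Sγ z - Sγ x‖ + ‖Sγ' z - Sγ' x‖ := by
            rw [hmdef]; ring
          have hrw : (‖Sγ z - Sγ x‖ / (z - x) + ‖Sγ' z - Sγ' x‖ / (z - x)) *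
              (Real.sqrt (1 - m z ^ 2))⁻¹ * (z - x)
              = (m z * 2) * (Real.sqrt (1 - m z ^ 2))⁻¹ := by
            rw [h2m]
            field_simp
          rw [hrw]
          calc θ z ≤ 2 * (m z / Real.sqrt (1 - m z^2)) := by rw [hθz]; linarith
            _ = m z * 2 * (Real.sqrt (1 - m z ^ 2))⁻¹ := by ring
        exact lt_of_le_of_lt hslope h1z
      · -- ι = -1 : θ x = π, slopes nonpositive; and 0 ≤ g x < r
        have hθx : θ x = Real.pi := by
          rw [hθdef]; simp only [← hιdef, hm1, Real.arccos_neg_one]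
        have hr0 : (0:ℝ) < r := lt_of_le_of_lt (by rw [hgx]; positivity) hr
        have hev : ∀ᶠ z in nhdsWithin x (Set.Ioi x), slope θ x z < r := by
          filter_upwards [self_mem_nhdsWithin] with z hz
          have hzx : (0:ℝ) < z - x := by simp only [Set.mem_Ioi] at hz; linarith
          have h1 : θ z ≤ θ x := by
            rw [hθx]; exact Real.arccos_le_pi _
          rw [slope_def_field]
          calc (θ z - θ x) / (z - x) ≤ 0 := div_nonpos_iff.2 (Or.inr ⟨by linarith, hzx.le⟩)
            _ < r := hr0
        exact hev.frequently
    · -- good case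
      push_neg at hbad
      obtain ⟨h1, hm1⟩ := hbad
      have hι2 : ι^2 < 1 := by
        have : |ι| < 1 := lt_of_le_of_ne hι1 (by
          intro h
          rcases abs_eq (by norm_num : (0:ℝ) ≤ 1) |>.1 h with h' | h'
          exacts [h1 h', hm1 h'])
        nlinarith [abs_nonneg ι, sq_abs ι]
      have hs0 : 0 < Real.sqrt (1 - ι^2) := Real.sqrt_pos.2 (by nlinarith)
      have hI : HasDerivWithinAt (fun t => (inner ℝ (Sγ t) (Sγ' t) : ℝ))
          ((inner ℝ (Sγ x) (W x) : ℝ) + (inner ℝ (U x) (Sγ' x) : ℝ)) (Set.Icc 0 ℓ) x :=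
        (hud x hxI).inner ℝ (hvd x hxI)
      have hθd : HasDerivWithinAt θ
          (-(Real.sqrt (1 - ι^2))⁻¹ * ((inner ℝ (Sγ x) (W x) : ℝ) + (inner ℝ (U x) (Sγ' x) : ℝ)))
          (Set.Icc 0 ℓ) x := by
        have harc := Real.hasDerivAt_arccos hm1 h1
        have h2 := harc.comp_hasDerivWithinAt x hI
        rw [one_div] at h2
        exact h2
      have hkey := key_alg (hu1 x hxI) (hv1 x hxI) (hvW x hxI) hcnn (hUeq x hxI)
      rw [← hιdef] at hkey
      have hθ'le : -(Real.sqrt (1 - ι^2))⁻¹ *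
          ((inner ℝ (Sγ x) (W x) : ℝ) + (inner ℝ (U x) (Sγ' x) : ℝ)) ≤ g x := by
        set A : ℝ := (inner ℝ (U x) (Sγ' x) : ℝ) + (inner ℝ (Sγ x) (W x) : ℝ) with hA
        have hkey' : -A ≤ Real.sqrt (1 - ι^2) * (‖W x‖ - ‖U x‖) := hkey
        have hginx : g x = ‖W x‖ - ‖U x‖ := rfl
        rw [hginx]
        have h2 := mul_le_mul_of_nonneg_left hkey' (inv_nonneg.2 hs0.le)
        rw [← mul_assoc, inv_mul_cancel₀ hs0.ne', one_mul] at h2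
        calc -(Real.sqrt (1 - ι^2))⁻¹ *
            ((inner ℝ (Sγ x) (W x) : ℝ) + (inner ℝ (U x) (Sγ' x) : ℝ))
            = (Real.sqrt (1 - ι^2))⁻¹ * (-A) := by rw [hA]; ring
          _ ≤ ‖W x‖ - ‖U x‖ := h2
      have hmem' : x ∉ Set.Ioi x := by simp
      have hθslope : Filter.Tendsto (slope θ x) (nhdsWithin x (Set.Ioi x))
          (nhds (-(Real.sqrt (1 - ι^2))⁻¹ *
            ((inner ℝ (Sγ x) (W x) : ℝ) + (inner ℝ (U x) (Sγ' x) : ℝ)))) :=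
        (hasDerivWithinAt_iff_tendsto_slope' hmem').1 (hθd.mono_of_mem_nhdsWithin hIccmem)
      exact (hθslope.eventually_lt_const (lt_of_le_of_lt hθ'le hr)).frequently
  -- apply the fencing theorem
  have main := image_le_of_liminf_slope_right_le_deriv_boundary (a := 0) (b := ℓ)
    hθcont (by simp [hBdef]) hBcont hB' bound
  have hθℓ : θ ℓ ≤ θ 0 + ∫ s in (0:ℝ)..ℓ, g s := main ⟨hℓ.le, le_rfl⟩
  have hUint : IntervalIntegrable (fun t => ‖U t‖) volume 0 ℓ :=
    hUcont.norm.intervalIntegrable_of_Icc hℓ.le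
  have hWint : IntervalIntegrable (fun t => ‖W t‖) volume 0 ℓ :=
    hWcont.norm.intervalIntegrable_of_Icc hℓ.le
  have hgsplit : (∫ s in (0:ℝ)..ℓ, g s)
      = (∫ s in (0:ℝ)..ℓ, ‖W s‖) - (∫ s in (0:ℝ)..ℓ, ‖U s‖) :=
    intervalIntegral.integral_sub hWint hUint
  set Lu : ℝ := ∫ s in (0:ℝ)..ℓ, ‖U s‖ with hLu
  set Lv : ℝ := ∫ s in (0:ℝ)..ℓ, ‖W s‖ with hLv
  have hkeyR : Lu + θ ℓ ≤ Lv + θ 0 := by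
    rw [hgsplit] at hθℓ; linarith
  have hLu0 : 0 ≤ Lu := intervalIntegral.integral_nonneg hℓ.le (fun t _ => norm_nonneg _)
  have hLv0 : 0 ≤ Lv := intervalIntegral.integral_nonneg hℓ.le (fun t _ => norm_nonneg _)
  have hθ00 : 0 ≤ θ 0 := Real.arccos_nonneg _
  have hθℓ0 : 0 ≤ θ ℓ := Real.arccos_nonneg _
  have hvarU : eVariationOn Sγ (Set.Icc 0 ℓ) ≤ ENNReal.ofReal Lu :=
    evar_le_int hℓ.le hud hUcont
  have hvarW : ENNReal.ofReal Lv ≤ eVariationOn Sγ' (Set.Icc 0 ℓ) :=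
    int_le_evar hℓ.le hvd hWcont
  have hdθℓ : d (Sγ ℓ) (Sγ' ℓ) = θ ℓ := rfl
  have hdθ0 : d (Sγ 0) (Sγ' 0) = θ 0 := rfl
  have part1 : eVariationOn Sγ (Set.Icc 0 ℓ) + ENNReal.ofReal (d (Sγ ℓ) (Sγ' ℓ))
      ≤ eVariationOn Sγ' (Set.Icc 0 ℓ) + ENNReal.ofReal (d (Sγ 0) (Sγ' 0)) := by
    rw [hdθℓ, hdθ0]
    calc eVariationOn Sγ (Set.Icc 0 ℓ) + ENNReal.ofReal (θ ℓ)
        ≤ ENNReal.ofReal Lu + ENNReal.ofReal (θ ℓ) := add_le_add_left hvarU _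
      _ = ENNReal.ofReal (Lu + θ ℓ) := (ENNReal.ofReal_add hLu0 hθℓ0).symm
      _ ≤ ENNReal.ofReal (Lv + θ 0) := ENNReal.ofReal_le_ofReal hkeyR
      _ = ENNReal.ofReal Lv + ENNReal.ofReal (θ 0) := ENNReal.ofReal_add hLv0 hθ00
      _ ≤ eVariationOn Sγ' (Set.Icc 0 ℓ) + ENNReal.ofReal (θ 0) := add_le_add_left hvarW _
  refine ⟨part1, ?_, ?_⟩
  · calc eVariationOn Sγ (Set.Icc 0 ℓ)
        ≤ eVariationOn Sγ (Set.Icc 0 ℓ) + ENNReal.ofReal (d (Sγ ℓ) (Sγ' ℓ)) := le_self_add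
      _ ≤ eVariationOn Sγ' (Set.Icc 0 ℓ) + ENNReal.ofReal (d (Sγ 0) (Sγ' 0)) := part1
      _ ≤ eVariationOn Sγ' (Set.Icc 0 ℓ) + ENNReal.ofReal (2 * Real.pi) := by
          apply add_le_add_right
          apply ENNReal.ofReal_le_ofReal
          have := Real.arccos_le_pi (inner ℝ (Sγ 0) (Sγ' 0) : ℝ)
          have hπ := Real.pi_pos
          calc d (Sγ 0) (Sγ' 0) ≤ Real.pi := this
            _ ≤ 2 * Real.pi := by linarith
  · intro hγeq hγ'eq
    have hdeq : d (Sγ ℓ) (Sγ' ℓ) = d (Sγ 0) (Sγ' 0) := by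
      have h1 : Sγ ℓ = Sγ 0 := by simp only [Sγ, ← hγeq]
      have h2 : Sγ' ℓ = Sγ' 0 := by simp only [Sγ', ← hγ'eq]
      rw [h1, h2]
    rw [hdeq] at part1
    exact ENNReal.le_of_add_le_add_right ENNReal.ofReal_ne_top part1
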